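/- Let Γ be a finite simple graph with edge e = {v,w}, and let Γ' = Γ - e and Γ'' = Γ/e. The map β_e sending an acyclic orientation O of Γ to the restriction O' ∈ Acyc(Γ') if reversing e in O creates a directed cycle or if O orients e as (v,w) and reversing e keeps acyclicity, and to the contraction O'' ∈ Acyc(Γ'') if O orients e as (w,v) and reversing e keeps acyclicity, is a bijection from Acyc(Γ) onto Acyc(Γ') ⊔ Acyc(Γ''). In particular α(Γ) = α(Γ') + α(Γ''), where α counts acyclic orientations. -/

import Mathlib

variable {V : Type*}

/-- An acyclic orientation of a simple graph `G`. -/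
structure AcyclicOrientation (G : SimpleGraph V) where
  dir : V → V → Prop
  dir_adj : ∀ {a b : V}, dir a b → G.Adj a b
  total : ∀ {a b : V}, G.Adj a b → dir a b ∨ dir b a
  acyclic : ∀ a : V, ¬ Relation.TransGen dir a a

namespace AcyclicOrientation

variable {G : SimpleGraph V}

/-- `v` is a source: no edge points into `v`. -/
def IsSource (O : AcyclicOrientation G) (v : V) : Prop := ∀ a, ¬ O.dir a v

/-- `O'` is obtained from `O` by converting the source `v` into a sink. -/
def ClickAt (O : AcyclicOrientation G) (v : V) (O' : AcyclicOrientation G) : Prop :=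
  O.IsSource v ∧ ∀ a b, (O'.dir a b ↔ (((a = v ∨ b = v) ∧ O.dir b a) ∨ (a ≠ v ∧ b ≠ v ∧ O.dir a b)))

/-- One source-to-sink conversion relates `O` and `O'`. -/
def IsClick (O O' : AcyclicOrientation G) : Prop := ∃ v, O.ClickAt v O'

/-- Click-equivalence: reachability by a finite sequence of clicks. -/
def ClickEquiv (O O' : AcyclicOrientation G) : Prop :=
  Relation.ReflTransGen IsClick O O'

/-- `ClickSeq O c O'` : the list `c` is a click-sequence applicable to `O` with result `O'`. -/
inductive ClickSeq : AcyclicOrientation G → List V → AcyclicOrientation G → Prop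
  | nil (O : AcyclicOrientation G) : ClickSeq O [] O
  | cons {O O' O'' : AcyclicOrientation G} {v : V} {c : List V} :
      O.ClickAt v O' → ClickSeq O' c O'' → ClickSeq O (v :: c) O''

open scoped Classical in
/-- `ν_P(O)`: forward minus backward edges of the closed walk `p` under `O`. -/
noncomputable def nu (O : AcyclicOrientation G) {u : V} (p : G.Walk u u) : ℤ :=
  (p.darts.map (fun d => if O.dir d.toProd.1 d.toProd.2 then (1 : ℤ) else -1)).sum

/-- The `vw`-interval: vertices on a directed path from `v` to `w`. -/
def interval (O : AcyclicOrientation G) (v w : V) : Set V :=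
  {a | Relation.ReflTransGen O.dir v a ∧ Relation.ReflTransGen O.dir a w}

end AcyclicOrientation

open AcyclicOrientation

/-- The setoid of click-equivalence (equivalence relation generated by clicks). -/
def clickSetoid (G : SimpleGraph V) : Setoid (AcyclicOrientation G) :=
  ⟨Relation.EqvGen IsClick, Relation.EqvGen.is_equivalence _⟩

/-- `κ(G)`: the number of click-equivalence classes of acyclic orientations. -/
noncomputable def kappa (G : SimpleGraph V) : ℕ :=
  Nat.card (Quotient (clickSetoid G))

/-- The graph obtained from `G` by contracting the vertex set `I` to the single vertex `vI ∈ I`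
(vertices of `I` other than `vI` become isolated). -/
def contractGraph (G : SimpleGraph V) (I : Set V) (vI : V) : SimpleGraph V where
  Adj a b := a ≠ b ∧
    ((a ∉ I ∧ b ∉ I ∧ G.Adj a b) ∨
     (a = vI ∧ b ∉ I ∧ ∃ x ∈ I, G.Adj x b) ∨
     (b = vI ∧ a ∉ I ∧ ∃ x ∈ I, G.Adj x a))
  symm := by
    refine ⟨?_⟩
    rintro a b ⟨hne, h⟩
    refine ⟨hne.symm, ?_⟩
    rcases h with ⟨ha, hb, hadj⟩ | ⟨ha, hb, x, hx, hadj⟩ | ⟨hb, ha, x, hx, hadj⟩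
    · exact Or.inl ⟨hb, ha, hadj.symm⟩
    · exact Or.inr (Or.inr ⟨ha, hb, x, hx, hadj⟩)
    · exact Or.inr (Or.inl ⟨hb, ha, x, hx, hadj⟩)
  loopless := by refine ⟨?_⟩; rintro a ⟨hne, -⟩; exact hne rfl

/-- The orientation of the contracted graph induced by an orientation `O` of `G`. -/
def contractDir {G : SimpleGraph V} (O : AcyclicOrientation G) (I : Set V) (vI : V) :
    V → V → Prop := fun a b =>
  (a ∉ I ∧ b ∉ I ∧ O.dir a b) ∨
  (a = vI ∧ b ∉ I ∧ ∃ x ∈ I, O.dir x b) ∨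
  (b = vI ∧ a ∉ I ∧ ∃ x ∈ I, O.dir a x)

/-- The orientation `i → j` iff `i` precedes `j` in the list `l`. -/
def permDir (G : SimpleGraph V) [DecidableEq V] (l : List V) : V → V → Prop :=
  fun i j => G.Adj i j ∧ l.idxOf i < l.idxOf j
/-- The orientation `O` with the edge `{v,w}` deleted. -/
def dirDel {G : SimpleGraph V} (O : AcyclicOrientation G) (v w : V) : V → V → Prop :=
  fun a b => O.dir a b ∧ ¬((a = v ∧ b = w) ∨ (a = w ∧ b = v))

/-- Reversing the edge `{v,w}` in `O` keeps the orientation acyclic. -/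
def RevAcyclic {G : SimpleGraph V} (O : AcyclicOrientation G) (v w : V) : Prop :=
  (O.dir v w ∧ ¬ Relation.TransGen (dirDel O v w) v w) ∨
  (O.dir w v ∧ ¬ Relation.TransGen (dirDel O v w) w v)

namespace BetaBij

open Relation

variable {G : SimpleGraph V}

lemma ext' {O O' : AcyclicOrientation G} (h : ∀ a b, O.dir a b ↔ O'.dir a b) : O = O' := by
  obtain ⟨d, da, t, ac⟩ := O
  obtain ⟨d', da', t', ac'⟩ := O'
  have hd : d = d' := by
    funext a b
    exact propext (h a b)
  subst hd
  rfl

lemma asymm (O : AcyclicOrientation G) {a b : V} (h : O.dir a b) : ¬ O.dir b a :=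
  fun h' => O.acyclic a ((TransGen.single h).tail h')

lemma mem_pair {a v w : V} : a ∈ ({v, w} : Set V) ↔ a = v ∨ a = w := by simp

lemma not_mem_pair {a v w : V} (h : a ∉ ({v, w} : Set V)) : a ≠ v ∧ a ≠ w := by
  simp only [Set.mem_insert_iff, Set.mem_singleton_iff, not_or] at h
  exact h

lemma delAdj {v w a b : V} :
    (G.deleteEdges {s(v, w)}).Adj a b ↔ G.Adj a b ∧ ¬((a = v ∧ b = w) ∨ (a = w ∧ b = v)) := by
  simp [SimpleGraph.deleteEdges_adj, Sym2.eq_iff]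

section Del

variable (O : AcyclicOrientation G) (v w : V)

lemma dirDel_transGen_mono {a b : V} (h : TransGen (dirDel O v w) a b) : TransGen O.dir a b :=
  TransGen.mono (fun _ _ h' => h'.1) _ _ h

lemma not_tg_dirDel_self (a : V) : ¬ TransGen (dirDel O v w) a a :=
  fun h => O.acyclic a (dirDel_transGen_mono O v w h)

lemma not_tg_dirDel_vw (h1 : O.dir w v) : ¬ TransGen (dirDel O v w) v w :=
  fun h => O.acyclic v ((dirDel_transGen_mono O v w h).tail h1)

/-- The orientation induced on `Γ - e`. -/
def delBack : AcyclicOrientation (G.deleteEdges {s(v, w)}) where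
  dir := dirDel O v w
  dir_adj := by
    intro a b h
    exact delAdj.mpr ⟨O.dir_adj h.1, h.2⟩
  total := by
    intro a b h
    rcases delAdj.mp h with ⟨hadj, hne⟩
    rcases O.total hadj with h' | h'
    · exact Or.inl ⟨h', hne⟩
    · refine Or.inr ⟨h', fun hp => hne ?_⟩
      tauto
  acyclic := not_tg_dirDel_self O v w

end Del

/-- Adding a new edge `p → q` to an acyclic relation with no path from `q` to `p`
keeps it acyclic. -/
lemma acyclic_add {r : V → V → Prop} (hr : ∀ a, ¬ TransGen r a a) {p q : V}
    (hpq : ¬ ReflTransGen r q p) :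
    ∀ a, ¬ TransGen (fun a b => r a b ∨ (a = p ∧ b = q)) a a := by
  have key : ∀ a b, TransGen (fun a b => r a b ∨ (a = p ∧ b = q)) a b →
      TransGen r a b ∨ (ReflTransGen r a p ∧ ReflTransGen r q b) := by
    intro a b h
    induction h with
    | single h =>
      rcases h with h | ⟨rfl, rfl⟩
      · exact Or.inl (TransGen.single h)
      · exact Or.inr ⟨ReflTransGen.refl, ReflTransGen.refl⟩
    | tail h1 h2 ih =>
      rcases h2 with h2 | ⟨rfl, rfl⟩
      · rcases ih with ih | ⟨ih1, ih2⟩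
        · exact Or.inl (ih.tail h2)
        · exact Or.inr ⟨ih1, ih2.tail h2⟩
      · rcases ih with ih | ⟨ih1, ih2⟩
        · exact Or.inr ⟨ih.to_reflTransGen, ReflTransGen.refl⟩
        · exact absurd ih2 hpq
  intro a h
  rcases key a a h with h' | ⟨h1, h2⟩
  · exact hr a h'
  · exact hpq (h2.trans h1)

section DelOrient

variable {v w : V}

/-- Recover an orientation of `Γ` from one of `Γ - e`. -/
def delOrient (hvw : G.Adj v w) (O₁ : AcyclicOrientation (G.deleteEdges {s(v, w)})) :
    AcyclicOrientation G where
  dir a b := O₁.dir a b ∨ (a = v ∧ b = w ∧ ¬ ReflTransGen O₁.dir w v) ∨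
      (a = w ∧ b = v ∧ ReflTransGen O₁.dir w v)
  dir_adj := by
    rintro a b (h | ⟨rfl, rfl, -⟩ | ⟨rfl, rfl, -⟩)
    · exact (delAdj.mp (O₁.dir_adj h)).1
    · exact hvw
    · exact hvw.symm
  total := by
    intro a b hadj
    by_cases hp : (a = v ∧ b = w) ∨ (a = w ∧ b = v)
    · by_cases hc : ReflTransGen O₁.dir w v
      · rcases hp with ⟨rfl, rfl⟩ | ⟨rfl, rfl⟩
        · exact Or.inr (Or.inr (Or.inr ⟨rfl, rfl, hc⟩))
        · exact Or.inl (Or.inr (Or.inr ⟨rfl, rfl, hc⟩))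
      · rcases hp with ⟨rfl, rfl⟩ | ⟨rfl, rfl⟩
        · exact Or.inl (Or.inr (Or.inl ⟨rfl, rfl, hc⟩))
        · exact Or.inr (Or.inr (Or.inl ⟨rfl, rfl, hc⟩))
    · rcases O₁.total (delAdj.mpr ⟨hadj, hp⟩) with h | h
      · exact Or.inl (Or.inl h)
      · exact Or.inr (Or.inl h)
  acyclic := by
    have hne : v ≠ w := hvw.ne
    by_cases hc : ReflTransGen O₁.dir w v
    · have hvw' : ¬ ReflTransGen O₁.dir v w := by
        intro h
        rcases Relation.reflTransGen_iff_eq_or_transGen.mp h with h' | h'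
        · exact hne h'.symm
        · exact O₁.acyclic v (h'.trans_left hc)
      intro a h
      refine acyclic_add O₁.acyclic hvw' a (TransGen.mono ?_ _ _ h)
      rintro x y (h' | ⟨rfl, rfl, hc'⟩ | ⟨rfl, rfl, -⟩)
      · exact Or.inl h'
      · exact absurd hc hc'
      · exact Or.inr ⟨rfl, rfl⟩
    · intro a h
      refine acyclic_add O₁.acyclic hc a (TransGen.mono ?_ _ _ h)
      rintro x y (h' | ⟨rfl, rfl, -⟩ | ⟨rfl, rfl, hc'⟩)
      · exact Or.inl h'
      · exact Or.inr ⟨rfl, rfl⟩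
      · exact absurd hc' hc

end DelOrient

end BetaBij
namespace BetaBij

open Relation

variable {G : SimpleGraph V}

section ConBack

variable (O : AcyclicOrientation G) (v w : V)

/-- `inR v w a s`: `s` is a representative of the contracted vertex `a`. -/
def inR (a s : V) : Prop := s = a ∨ (a = v ∧ s = w)

lemma inR_join {v w b t u : V} (ht : inR v w b t) (hu : inR v w b u) :
    t = u ∨ (t = v ∧ u = w) ∨ (t = w ∧ u = v) := by
  unfold inR at ht hu
  rcases ht with h1 | ⟨h1, h1'⟩ <;> rcases hu with h2 | ⟨h2, h2'⟩
  · exact Or.inl (h1.trans h2.symm)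
  · exact Or.inr (Or.inl ⟨h1.trans h2, h2'⟩)
  · exact Or.inr (Or.inr ⟨h1', h2.trans h1⟩)
  · exact Or.inl (h1'.trans h2'.symm)

lemma contractDir_step {a b : V} (h : contractDir O {v, w} v a b) :
    ∃ s t, inR v w a s ∧ inR v w b t ∧ dirDel O v w s t := by
  rcases h with ⟨ha, hb, h⟩ | ⟨ha, hb, x, hx, h⟩ | ⟨hb, ha, x, hx, h⟩
  · refine ⟨a, b, Or.inl rfl, Or.inl rfl, h, ?_⟩
    rcases not_mem_pair ha with ⟨h1, h2⟩
    tauto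
  · refine ⟨x, b, ?_, Or.inl rfl, h, ?_⟩
    · rcases mem_pair.mp hx with h' | h'
      · exact Or.inl (h'.trans ha.symm)
      · exact Or.inr ⟨ha, h'⟩
    · rcases not_mem_pair hb with ⟨h1, h2⟩
      tauto
  · refine ⟨a, x, Or.inl rfl, ?_, h, ?_⟩
    · rcases mem_pair.mp hx with h' | h'
      · exact Or.inl (h'.trans hb.symm)
      · exact Or.inr ⟨hb, h'⟩
    · rcases not_mem_pair ha with ⟨h1, h2⟩
      tauto

/-- The contraction of an acyclic orientation with `w → v` and no other
directed path from `w` to `v` is acyclic. -/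
lemma contractDir_acyclic (h1 : O.dir w v) (h2 : ¬ TransGen (dirDel O v w) w v) :
    ∀ a, ¬ TransGen (contractDir O {v, w} v) a a := by
  set D := dirDel O v w with hD
  have hcyc : ∀ a, ¬ TransGen D a a := not_tg_dirDel_self O v w
  have hvw' : ¬ TransGen D v w := not_tg_dirDel_vw O v w h1
  have key : ∀ a b, TransGen (contractDir O {v, w} v) a b →
      (∃ s t, inR v w a s ∧ inR v w b t ∧ TransGen D s t) ∨
      ((∃ s, inR v w a s ∧ TransGen D s v) ∧ (∃ t, inR v w b t ∧ TransGen D w t)) ∨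
      ((∃ s, inR v w a s ∧ TransGen D s w) ∧ (∃ t, inR v w b t ∧ TransGen D v t)) := by
    intro a b h
    induction h with
    | single h =>
      obtain ⟨s, t, hs, ht, hst⟩ := contractDir_step O v w h
      exact Or.inl ⟨s, t, hs, ht, TransGen.single hst⟩
    | tail h1' h2' ih =>
      obtain ⟨u, t'', hbu, hct, hut⟩ := contractDir_step O v w h2'
      rcases ih with ⟨s, t, has, hbt, hst⟩ | ⟨⟨s, has, hsv⟩, ⟨t, hbt, hwt⟩⟩ |
          ⟨⟨s, has, hsw⟩, ⟨t, hbt, hvt⟩⟩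
      · rcases inR_join hbt hbu with heq | ⟨e1, e2⟩ | ⟨e1, e2⟩
        · subst heq
          exact Or.inl ⟨s, t'', has, hct, hst.tail hut⟩
        · exact Or.inr (Or.inl ⟨⟨s, has, e1 ▸ hst⟩, ⟨t'', hct, TransGen.single (e2 ▸ hut)⟩⟩)
        · exact Or.inr (Or.inr ⟨⟨s, has, e1 ▸ hst⟩, ⟨t'', hct, TransGen.single (e2 ▸ hut)⟩⟩)
      · rcases inR_join hbt hbu with heq | ⟨e1, e2⟩ | ⟨e1, e2⟩
        · subst heq
          exact Or.inr (Or.inl ⟨⟨s, has, hsv⟩, ⟨t'', hct, hwt.tail hut⟩⟩)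
        · exact absurd (e1 ▸ hwt) h2
        · exact absurd (e1 ▸ hwt : TransGen D w w) (hcyc w)
      · rcases inR_join hbt hbu with heq | ⟨e1, e2⟩ | ⟨e1, e2⟩
        · subst heq
          exact Or.inr (Or.inr ⟨⟨s, has, hsw⟩, ⟨t'', hct, hvt.tail hut⟩⟩)
        · exact absurd (e1 ▸ hvt : TransGen D v v) (hcyc v)
        · exact absurd (e1 ▸ hvt) hvw'
  intro a h
  rcases key a a h with ⟨s, t, has, hat, hst⟩ | ⟨⟨s, has, hsv⟩, ⟨t, hat, hwt⟩⟩ |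
      ⟨⟨s, has, hsw⟩, ⟨t, hat, hvt⟩⟩
  · rcases inR_join hat has with heq | ⟨e1, e2⟩ | ⟨e1, e2⟩
    · exact hcyc t (heq ▸ hst)
    · exact h2 (e2 ▸ e1 ▸ hst)
    · exact hvw' (e2 ▸ e1 ▸ hst)
  · rcases inR_join hat has with heq | ⟨e1, e2⟩ | ⟨e1, e2⟩
    · exact h2 (hwt.trans (heq ▸ hsv))
    · exact h2 (e1 ▸ hwt)
    · exact hcyc w (e1 ▸ hwt)
  · rcases inR_join hat has with heq | ⟨e1, e2⟩ | ⟨e1, e2⟩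
    · exact hvw' (hvt.trans (heq ▸ hsw))
    · exact hcyc v (e1 ▸ hvt)
    · exact hvw' (e1 ▸ hvt)

/-- The orientation induced on `Γ / e`. -/
def conBack (h1 : O.dir w v) (h2 : ¬ TransGen (dirDel O v w) w v) :
    AcyclicOrientation (contractGraph G {v, w} v) where
  dir := contractDir O {v, w} v
  dir_adj := by
    rintro a b (⟨ha, hb, h⟩ | ⟨ha, hb, x, hx, h⟩ | ⟨hb, ha, x, hx, h⟩)
    · exact ⟨(O.dir_adj h).ne, Or.inl ⟨ha, hb, O.dir_adj h⟩⟩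
    · refine ⟨fun hab => (not_mem_pair hb).1 (hab.symm.trans ha), ?_⟩
      exact Or.inr (Or.inl ⟨ha, hb, x, hx, O.dir_adj h⟩)
    · refine ⟨fun hab => (not_mem_pair ha).1 (hab.trans hb), ?_⟩
      exact Or.inr (Or.inr ⟨hb, ha, x, hx, (O.dir_adj h).symm⟩)
  total := by
    rintro a b ⟨hne, (⟨ha, hb, hadj⟩ | ⟨ha, hb, x, hx, hadj⟩ | ⟨hb, ha, x, hx, hadj⟩)⟩
    · rcases O.total hadj with h | h
      · exact Or.inl (Or.inl ⟨ha, hb, h⟩)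
      · exact Or.inr (Or.inl ⟨hb, ha, h⟩)
    · rcases O.total hadj with h | h
      · exact Or.inl (Or.inr (Or.inl ⟨ha, hb, x, hx, h⟩))
      · exact Or.inr (Or.inr (Or.inr ⟨ha, hb, x, hx, h⟩))
    · rcases O.total hadj with h | h
      · exact Or.inr (Or.inr (Or.inl ⟨hb, ha, x, hx, h⟩))
      · exact Or.inl (Or.inr (Or.inr ⟨hb, ha, x, hx, h⟩))
  acyclic := contractDir_acyclic O v w h1 h2

end ConBack

end BetaBij
namespace BetaBij

open Relation

variable {G : SimpleGraph V}

section ConOrient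

variable [DecidableEq V] {v w : V}

/-- Collapse `w` to `v`. -/
def rho (v w x : V) : V := if x = w then v else x

lemma rho_w : rho v w w = v := by simp [rho]

lemma rho_of_ne {x : V} (h : x ≠ w) : rho v w x = x := by simp [rho, h]

lemma rho_v : rho v w v = v := by
  by_cases h : v = w
  · simp [rho, h]
  · simp [rho, h]

lemma rho_adj (hvw : G.Adj v w) {a b : V} (hadj : G.Adj a b)
    (h1 : ¬(a = w ∧ b = v)) (h2 : ¬(a = v ∧ b = w)) :
    (contractGraph G {v, w} v).Adj (rho v w a) (rho v w b) := by
  have hne := hadj.ne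
  by_cases haw : a = w
  · have hbw : b ≠ w := fun h => hne (haw.trans h.symm)
    have hbv : b ≠ v := fun h => h1 ⟨haw, h⟩
    have hbI : b ∉ ({v, w} : Set V) := by simp [hbv, hbw]
    rw [haw, rho_w, rho_of_ne hbw]
    exact ⟨fun h => hbv h.symm, Or.inr (Or.inl ⟨rfl, hbI, w, by simp, haw ▸ hadj⟩)⟩
  · by_cases hbw : b = w
    · have hav : a ≠ v := fun h => h2 ⟨h, hbw⟩
      have haI : a ∉ ({v, w} : Set V) := by simp [hav, haw]
      rw [hbw, rho_w, rho_of_ne haw]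
      exact ⟨hav, Or.inr (Or.inr ⟨rfl, haI, w, by simp, (hbw ▸ hadj).symm⟩)⟩
    · rw [rho_of_ne haw, rho_of_ne hbw]
      by_cases hav : a = v
      · have hbv : b ≠ v := fun h => hne (hav.trans h.symm)
        have hbI : b ∉ ({v, w} : Set V) := by simp [hbv, hbw]
        exact ⟨hne, Or.inr (Or.inl ⟨hav, hbI, v, by simp, hav ▸ hadj⟩)⟩
      · by_cases hbv : b = v
        · have haI : a ∉ ({v, w} : Set V) := by simp [hav, haw]
          exact ⟨hne, Or.inr (Or.inr ⟨hbv, haI, v, by simp, (hbv ▸ hadj).symm⟩)⟩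
        · have haI : a ∉ ({v, w} : Set V) := by simp [hav, haw]
          have hbI : b ∉ ({v, w} : Set V) := by simp [hbv, hbw]
          exact ⟨hne, Or.inl ⟨haI, hbI, hadj⟩⟩

/-- Recover an orientation of `Γ` from one of `Γ / e`. -/
def conOrient (hvw : G.Adj v w) (O₂ : AcyclicOrientation (contractGraph G {v, w} v)) :
    AcyclicOrientation G where
  dir a b := (a = w ∧ b = v) ∨ (G.Adj a b ∧ O₂.dir (rho v w a) (rho v w b))
  dir_adj := by
    rintro a b (⟨rfl, rfl⟩ | ⟨h, -⟩)
    · exact hvw.symm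
    · exact h
  total := by
    intro a b hadj
    by_cases h1 : a = w ∧ b = v
    · exact Or.inl (Or.inl h1)
    · by_cases h2 : a = v ∧ b = w
      · exact Or.inr (Or.inl ⟨h2.2, h2.1⟩)
      · rcases O₂.total (rho_adj hvw hadj h1 h2) with h | h
        · exact Or.inl (Or.inr ⟨hadj, h⟩)
        · exact Or.inr (Or.inr ⟨hadj.symm, h⟩)
  acyclic := by
    have key : ∀ a b, TransGen (fun a b =>
        (a = w ∧ b = v) ∨ (G.Adj a b ∧ O₂.dir (rho v w a) (rho v w b))) a b →
        TransGen O₂.dir (rho v w a) (rho v w b) ∨ (a = w ∧ b = v) := by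
      intro a b h
      induction h with
      | single h =>
        rcases h with ⟨ha, hb⟩ | ⟨-, h⟩
        · exact Or.inr ⟨ha, hb⟩
        · exact Or.inl (TransGen.single h)
      | @tail b' c' h1 h2 ih =>
        rcases h2 with ⟨hb, hc⟩ | ⟨-, h2⟩
        · rcases ih with ih | ⟨ha, hb'⟩
          · left
            have e : rho v w b' = rho v w c' := by rw [hb, hc, rho_w, rho_v]
            rwa [← e]
          · exact absurd (hb'.symm.trans hb) hvw.ne
        · rcases ih with ih | ⟨ha, hb'⟩
          · exact Or.inl (ih.tail h2)
          · left
            have e : rho v w a = rho v w b' := by rw [ha, hb', rho_w, rho_v]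
            rw [e]
            exact TransGen.single h2
    intro a h
    rcases key a a h with h' | ⟨h1, h2⟩
    · exact O₂.acyclic _ h'
    · exact hvw.ne (h2.symm.trans h1)

end ConOrient

end BetaBij
namespace BetaBij

open Relation

variable {G : SimpleGraph V}

section RoundTrips

variable [DecidableEq V] {v w : V}

lemma rho_mem {x : V} (hx : x ∈ ({v, w} : Set V)) : rho v w x = v := by
  rcases mem_pair.mp hx with h | h
  · rw [h, rho_v]
  · rw [h, rho_w]

/-- Round trip on the deleted-edge side, starting from `Γ - e`. -/
lemma del_roundtrip (hvw : G.Adj v w) (O₁ : AcyclicOrientation (G.deleteEdges {s(v, w)}))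
    (a b : V) : dirDel (delOrient hvw O₁) v w a b ↔ O₁.dir a b := by
  constructor
  · rintro ⟨(h | ⟨ha, hb, -⟩ | ⟨ha, hb, -⟩), hnp⟩
    · exact h
    · exact absurd (Or.inl ⟨ha, hb⟩) hnp
    · exact absurd (Or.inr ⟨ha, hb⟩) hnp
  · intro h
    exact ⟨Or.inl h, (delAdj.mp (O₁.dir_adj h)).2⟩

lemma del_cond (hvw : G.Adj v w) (O₁ : AcyclicOrientation (G.deleteEdges {s(v, w)})) :
    ¬ ((delOrient hvw O₁).dir w v ∧
      ¬ TransGen (dirDel (delOrient hvw O₁) v w) w v) := by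
  rintro ⟨hd, hnt⟩
  rcases hd with h | ⟨hwv, -, -⟩ | ⟨-, -, hr⟩
  · exact (delAdj.mp (O₁.dir_adj h)).2 (Or.inr ⟨rfl, rfl⟩)
  · exact hvw.ne hwv.symm
  · rcases Relation.reflTransGen_iff_eq_or_transGen.mp hr with heq | htg
    · exact hvw.ne heq
    · refine hnt (TransGen.mono (fun x y h => ?_) _ _ htg)
      exact ⟨Or.inl h, (delAdj.mp (O₁.dir_adj h)).2⟩

/-- Round trip on the deleted-edge side, starting from `Γ`. -/
lemma del_roundtrip' (hvw : G.Adj v w) (O : AcyclicOrientation G)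
    (hnc : ¬ (O.dir w v ∧ ¬ TransGen (dirDel O v w) w v)) (a b : V) :
    (delOrient hvw (delBack O v w)).dir a b ↔ O.dir a b := by
  constructor
  · rintro ((h : dirDel O v w a b) | ⟨ha, hb, hnr⟩ | ⟨ha, hb, hr⟩)
    · exact h.1
    · rcases O.total hvw with h | h
      · rw [ha, hb]; exact h
      · exfalso
        rcases not_and_not_right.mp hnc h with htg
        exact hnr htg.to_reflTransGen
    · rcases O.total hvw with h | h
      · exfalso
        rcases Relation.reflTransGen_iff_eq_or_transGen.mp hr with heq | htg
        · exact hvw.ne heq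
        · exact O.acyclic w ((dirDel_transGen_mono O v w htg).tail h)
      · rw [ha, hb]; exact h
  · intro hO
    by_cases hp : (a = v ∧ b = w) ∨ (a = w ∧ b = v)
    · rcases hp with ⟨ha, hb⟩ | ⟨ha, hb⟩
      · refine Or.inr (Or.inl ⟨ha, hb, fun hr => ?_⟩)
        rcases Relation.reflTransGen_iff_eq_or_transGen.mp hr with heq | htg
        · exact hvw.ne heq
        · exact O.acyclic w ((dirDel_transGen_mono O v w htg).tail (hb ▸ ha ▸ hO))
      · refine Or.inr (Or.inr ⟨ha, hb, ?_⟩)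
        exact (not_and_not_right.mp hnc (hb ▸ ha ▸ hO)).to_reflTransGen
    · exact Or.inl (⟨hO, hp⟩ : dirDel O v w a b)

/-- Round trip on the contracted side, starting from `Γ`. -/
lemma con_roundtrip' (hvw : G.Adj v w) (O : AcyclicOrientation G)
    (h1 : O.dir w v) (h2 : ¬ TransGen (dirDel O v w) w v) (a b : V) :
    (conOrient hvw (conBack O v w h1 h2)).dir a b ↔ O.dir a b := by
  have hvw' : ¬ TransGen (dirDel O v w) v w := not_tg_dirDel_vw O v w h1
  constructor
  · rintro (⟨ha, hb⟩ | ⟨hadj, hcd⟩)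
    · rw [ha, hb]; exact h1
    · by_cases haw : a = w
      · by_cases hbw : b = w
        · exact absurd (haw.trans hbw.symm) hadj.ne
        · rw [haw, rho_w, rho_of_ne hbw] at hcd
          rw [haw]
          rcases hcd with ⟨hvI, -, -⟩ | ⟨-, hbI, x, hx, hxb⟩ | ⟨hbv, hvI, -⟩
          · exact absurd (by simp) hvI
          · rcases mem_pair.mp hx with h' | h'
            · rcases O.total (haw ▸ hadj : G.Adj w b) with h | h
              · exact h
              · exfalso
                apply hvw'
                have hb1 : b ≠ v := (not_mem_pair hbI).1
                have hb2 : b ≠ w := (not_mem_pair hbI).2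
                have d1 : dirDel O v w v b := ⟨h' ▸ hxb, by tauto⟩
                have d2 : dirDel O v w b w := ⟨h, by tauto⟩
                exact (TransGen.single d1).tail d2
            · exact h' ▸ hxb
          · exact absurd (by simp) hvI
      · by_cases hbw : b = w
        · rw [rho_of_ne haw, hbw, rho_w] at hcd
          rw [hbw]
          rcases hcd with ⟨-, hvI, -⟩ | ⟨-, hvI, -⟩ | ⟨-, haI, x, hx, hax⟩
          · exact absurd (by simp) hvI
          · exact absurd (by simp) hvI
          · rcases mem_pair.mp hx with h' | h'
            · rcases O.total (hbw ▸ hadj : G.Adj a w) with h | h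
              · exact h
              · exfalso
                apply h2
                have ha1 : a ≠ v := (not_mem_pair haI).1
                have ha2 : a ≠ w := (not_mem_pair haI).2
                have d1 : dirDel O v w w a := ⟨h, by tauto⟩
                have d2 : dirDel O v w a v := ⟨h' ▸ hax, by tauto⟩
                exact (TransGen.single d1).tail d2
            · exact h' ▸ hax
        · rw [rho_of_ne haw, rho_of_ne hbw] at hcd
          rcases hcd with ⟨-, -, h⟩ | ⟨hav, hbI, x, hx, hxb⟩ | ⟨hbv, haI, x, hx, hax⟩
          · exact h
          · rcases mem_pair.mp hx with h' | h'
            · rw [hav]; exact h' ▸ hxb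
            · rcases O.total hadj with h | h
              · exact h
              · exfalso
                apply h2
                have hb1 : b ≠ v := (not_mem_pair hbI).1
                have hb2 : b ≠ w := (not_mem_pair hbI).2
                have d1 : dirDel O v w w b := ⟨h' ▸ hxb, by tauto⟩
                have d2 : dirDel O v w b v := ⟨hav ▸ h, by tauto⟩
                exact (TransGen.single d1).tail d2
          · rcases mem_pair.mp hx with h' | h'
            · rw [hbv]; exact h' ▸ hax
            · rcases O.total hadj with h | h
              · exact h
              · exfalso
                apply hvw'
                have ha1 : a ≠ v := (not_mem_pair haI).1
                have ha2 : a ≠ w := (not_mem_pair haI).2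
                have d1 : dirDel O v w v a := ⟨hbv ▸ h, by tauto⟩
                have d2 : dirDel O v w a w := ⟨h' ▸ hax, by tauto⟩
                exact (TransGen.single d1).tail d2
  · intro hO
    have hadj := O.dir_adj hO
    by_cases haw : a = w
    · by_cases hbv : b = v
      · exact Or.inl ⟨haw, hbv⟩
      · by_cases hbw : b = w
        · exact absurd (haw.trans hbw.symm) hadj.ne
        · have hbI : b ∉ ({v, w} : Set V) := by simp [hbv, hbw]
          refine Or.inr ⟨hadj, ?_⟩
          rw [haw, rho_w, rho_of_ne hbw]
          exact Or.inr (Or.inl ⟨rfl, hbI, w, by simp, haw ▸ hO⟩)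
    · by_cases hav : a = v
      · by_cases hbw : b = w
        · exact absurd (hbw ▸ hav ▸ hO : O.dir v w) (asymm O h1)
        · by_cases hbv : b = v
          · exact absurd (hav.trans hbv.symm) hadj.ne
          · have hbI : b ∉ ({v, w} : Set V) := by simp [hbv, hbw]
            refine Or.inr ⟨hadj, ?_⟩
            rw [rho_of_ne haw, rho_of_ne hbw]
            exact Or.inr (Or.inl ⟨hav, hbI, v, by simp, hav ▸ hO⟩)
      · have haI : a ∉ ({v, w} : Set V) := by simp [hav, haw]
        by_cases hbw : b = w
        · refine Or.inr ⟨hadj, ?_⟩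
          rw [rho_of_ne haw, hbw, rho_w]
          exact Or.inr (Or.inr ⟨rfl, haI, w, by simp, hbw ▸ hO⟩)
        · by_cases hbv : b = v
          · refine Or.inr ⟨hadj, ?_⟩
            rw [rho_of_ne haw, rho_of_ne hbw]
            exact Or.inr (Or.inr ⟨hbv, haI, v, by simp, hbv ▸ hO⟩)
          · have hbI : b ∉ ({v, w} : Set V) := by simp [hbv, hbw]
            refine Or.inr ⟨hadj, ?_⟩
            rw [rho_of_ne haw, rho_of_ne hbw]
            exact Or.inl ⟨haI, hbI, hO⟩

lemma con_dir_wv (hvw : G.Adj v w) (O₂ : AcyclicOrientation (contractGraph G {v, w} v)) :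
    (conOrient hvw O₂).dir w v := Or.inl ⟨rfl, rfl⟩

lemma con_no_path (hvw : G.Adj v w) (O₂ : AcyclicOrientation (contractGraph G {v, w} v)) :
    ¬ TransGen (dirDel (conOrient hvw O₂) v w) w v := by
  intro h
  have step : ∀ a b, dirDel (conOrient hvw O₂) v w a b →
      O₂.dir (rho v w a) (rho v w b) := by
    rintro a b ⟨(⟨ha, hb⟩ | ⟨-, h'⟩), hnp⟩
    · exact absurd (Or.inr ⟨ha, hb⟩) hnp
    · exact h'
  have : TransGen O₂.dir (rho v w w) (rho v w v) := Relation.TransGen.lift (rho v w) step _ _ h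
  rw [rho_w, rho_v] at this
  exact O₂.acyclic v this

/-- Round trip on the contracted side, starting from `Γ / e`. -/
lemma con_roundtrip (hvw : G.Adj v w) (O₂ : AcyclicOrientation (contractGraph G {v, w} v))
    (a b : V) : contractDir (conOrient hvw O₂) {v, w} v a b ↔ O₂.dir a b := by
  constructor
  · rintro (⟨haI, hbI, hd⟩ | ⟨hav, hbI, x, hx, hd⟩ | ⟨hbv, haI, x, hx, hd⟩)
    · rcases hd with ⟨ha, -⟩ | ⟨-, h⟩
      · exact absurd ha (not_mem_pair haI).2
      · rwa [rho_of_ne (not_mem_pair haI).2, rho_of_ne (not_mem_pair hbI).2] at h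
    · rcases hd with ⟨-, hbv⟩ | ⟨-, h⟩
      · exact absurd hbv (not_mem_pair hbI).1
      · rw [rho_mem hx, rho_of_ne (not_mem_pair hbI).2] at h
        rw [hav]; exact h
    · rcases hd with ⟨haw, -⟩ | ⟨-, h⟩
      · exact absurd haw (not_mem_pair haI).2
      · rw [rho_mem hx, rho_of_ne (not_mem_pair haI).2] at h
        rw [hbv]; exact h
  · intro h
    obtain ⟨hne, hbr⟩ := O₂.dir_adj h
    rcases hbr with ⟨haI, hbI, hadj⟩ | ⟨hav, hbI, x, hx, hadj⟩ | ⟨hbv, haI, x, hx, hadj⟩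
    · refine Or.inl ⟨haI, hbI, Or.inr ⟨hadj, ?_⟩⟩
      rwa [rho_of_ne (not_mem_pair haI).2, rho_of_ne (not_mem_pair hbI).2]
    · refine Or.inr (Or.inl ⟨hav, hbI, x, hx, Or.inr ⟨hadj, ?_⟩⟩)
      rw [rho_mem hx, rho_of_ne (not_mem_pair hbI).2]
      exact hav ▸ h
    · refine Or.inr (Or.inr ⟨hbv, haI, x, hx, Or.inr ⟨hadj.symm, ?_⟩⟩)
      rw [rho_mem hx, rho_of_ne (not_mem_pair haI).2]
      exact hbv ▸ h

end RoundTrips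

section Fmap

variable [DecidableEq V] {v w : V}

open Classical in
/-- The map `β_e`. -/
noncomputable def fmap (O : AcyclicOrientation G) :
    AcyclicOrientation (G.deleteEdges {s(v, w)}) ⊕
      AcyclicOrientation (contractGraph G {v, w} v) :=
  if h : O.dir w v ∧ ¬ TransGen (dirDel O v w) w v
  then Sum.inr (conBack O v w h.1 h.2)
  else Sum.inl (delBack O v w)

lemma left_inv (hvw : G.Adj v w) (O : AcyclicOrientation G) :
    Sum.elim (delOrient hvw) (conOrient hvw) (fmap (v := v) (w := w) O) = O := by
  unfold fmap
  by_cases h : O.dir w v ∧ ¬ TransGen (dirDel O v w) w v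
  · rw [dif_pos h]
    exact ext' (con_roundtrip' hvw O h.1 h.2)
  · rw [dif_neg h]
    exact ext' (del_roundtrip' hvw O h)

lemma right_inv (hvw : G.Adj v w)
    (s : AcyclicOrientation (G.deleteEdges {s(v, w)}) ⊕
      AcyclicOrientation (contractGraph G {v, w} v)) :
    fmap (v := v) (w := w) (Sum.elim (delOrient hvw) (conOrient hvw) s) = s := by
  rcases s with O₁ | O₂
  · show fmap (delOrient hvw O₁) = Sum.inl O₁
    unfold fmap
    rw [dif_neg (del_cond hvw O₁)]
    exact congrArg Sum.inl (ext' (del_roundtrip hvw O₁))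
  · show fmap (conOrient hvw O₂) = Sum.inr O₂
    unfold fmap
    rw [dif_pos ⟨con_dir_wv hvw O₂, con_no_path hvw O₂⟩]
    exact congrArg Sum.inr (ext' (con_roundtrip hvw O₂))

end Fmap

lemma finite_acyclic [Finite V] : Finite (AcyclicOrientation G) :=
  Finite.of_injective (fun O => O.dir)
    (fun O O' h => ext' fun a b => by rw [show O.dir = O'.dir from h])

end BetaBij
/-- The map `β_e` is a bijection `Acyc(Γ) → Acyc(Γ') ⊔ Acyc(Γ'')`; in particular
`α(Γ) = α(Γ') + α(Γ'')`. -/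
theorem beta_bijection [Fintype V] [DecidableEq V] (G : SimpleGraph V) (v w : V)
    (hvw : G.Adj v w) :
    ∃ f : AcyclicOrientation G →
        (AcyclicOrientation (G.deleteEdges {s(v, w)}) ⊕
          AcyclicOrientation (contractGraph G {v, w} v)),
      Function.Bijective f ∧
      (∀ O : AcyclicOrientation G,
        ((¬ RevAcyclic O v w ∨ O.dir v w) →
          ∃ O₁, f O = Sum.inl O₁ ∧ ∀ a b, O₁.dir a b ↔ dirDel O v w a b) ∧
        ((RevAcyclic O v w ∧ O.dir w v) →
          ∃ O₂, f O = Sum.inr O₂ ∧ ∀ a b, O₂.dir a b ↔ contractDir O {v, w} v a b)) ∧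
      Nat.card (AcyclicOrientation G) =
        Nat.card (AcyclicOrientation (G.deleteEdges {s(v, w)})) +
          Nat.card (AcyclicOrientation (contractGraph G {v, w} v)) := by

  classical
  haveI : Finite (AcyclicOrientation G) := BetaBij.finite_acyclic
  haveI : Finite (AcyclicOrientation (G.deleteEdges {s(v, w)})) := BetaBij.finite_acyclic
  haveI : Finite (AcyclicOrientation (contractGraph G {v, w} v)) := BetaBij.finite_acyclic
  have hbij : Function.Bijective (BetaBij.fmap (G := G) (v := v) (w := w)) :=
    Function.bijective_iff_has_inverse.mpr
      ⟨Sum.elim (BetaBij.delOrient hvw) (BetaBij.conOrient hvw),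
        BetaBij.left_inv hvw, BetaBij.right_inv hvw⟩
  refine ⟨BetaBij.fmap (v := v) (w := w), hbij, ?_, ?_⟩
  · intro O
    constructor
    · intro hc
      have hcond : ¬ (O.dir w v ∧ ¬ Relation.TransGen (dirDel O v w) w v) := by
        rcases hc with hna | hd
        · exact fun hcond => hna (Or.inr hcond)
        · exact fun hcond => BetaBij.asymm O hd hcond.1
      refine ⟨BetaBij.delBack O v w, ?_, fun a b => Iff.rfl⟩
      unfold BetaBij.fmap
      rw [dif_neg hcond]
    · rintro ⟨hra, hd⟩
      have hcond : O.dir w v ∧ ¬ Relation.TransGen (dirDel O v w) w v := by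
        rcases hra with ⟨h', -⟩ | h''
        · exact absurd hd (BetaBij.asymm O h')
        · exact h''
      refine ⟨BetaBij.conBack O v w hcond.1 hcond.2, ?_, fun a b => Iff.rfl⟩
      unfold BetaBij.fmap
      rw [dif_pos hcond]
  · rw [Nat.card_eq_of_bijective _ hbij, Nat.card_sum]
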